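/- arXiv:math/0512031 — 2 statements merged into one kernel-verified Lean document; each statement's English description precedes it below -/
import Mathlib

section
/- The map ρ_B : B → C ⊗ B defined by ρ_B(b) = α(b₍₁₎)𝕀β(b₍₃₎) ⊗ b₍₂₎ is a coassociative C-comodule structure on B. -/
/- STATEMENT 18: The map ρ_B : B → C ⊗ B, ρ_B(b) = α(b₍₁₎)𝕀β(b₍₃₎) ⊗ b₍₂₎, is a
coassociative C-comodule structure on B. -/

open TensorProduct

noncomputable section

variable (k : Type) [Field k] (B : Type) [Ring B] [Bialgebra k B]
variable (C : Type) [AddCommGroup C] [Module k C]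
variable (DeltaC : C →ₗ[k] C ⊗[k] C)
variable (l : B →ₗ[k] C →ₗ[k] C) (r : B →ₗ[k] C →ₗ[k] C)
variable (alpha : B →ₗ[k] B) (beta : B →ₗ[k] B) (I : C)

def Delta2B : B →ₗ[k] (B ⊗[k] B) ⊗[k] B :=
  (TensorProduct.map Coalgebra.comul LinearMap.id) ∘ₗ Coalgebra.comul

variable {A A' A'' : Type} [AddCommGroup A] [AddCommGroup A'] [AddCommGroup A'']
  [Module k A] [Module k A'] [Module k A'']

def sw3 : (A ⊗[k] A') ⊗[k] A'' →ₗ[k] (A ⊗[k] A'') ⊗[k] A' :=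
  (TensorProduct.assoc k A A'' A').symm.toLinearMap
    ∘ₗ (TensorProduct.map LinearMap.id (TensorProduct.comm k A' A'').toLinearMap)
    ∘ₗ (TensorProduct.assoc k A A' A'').toLinearMap

/-- `(a ⊗ b) ⊗ c ↦ α(a) c β(b)`, the two-sided action on one `C`-leg. -/
def legB : (B ⊗[k] B) ⊗[k] C →ₗ[k] C :=
  TensorProduct.lift (TensorProduct.lift (LinearMap.mk₂ k
    (fun (a b : B) => (l (alpha a)) ∘ₗ (r (beta b)))
    (fun a a' b => by simp [map_add, LinearMap.add_comp])
    (fun c a b => by simp [map_smul, LinearMap.smul_comp])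
    (fun a b b' => by simp [map_add, LinearMap.comp_add])
    (fun c a b => by simp [map_smul, LinearMap.comp_smul])))

/-- `𝒦ⁿ_{(α,β)}(C,B) = C^⊗n ⊗ B`, nested as `C ⊗ (C ⊗ (⋯ ⊗ B))`. -/
def KB : ℕ → ModuleCat k := fun n =>
  Nat.rec (ModuleCat.of k B) (fun _ ih => ModuleCat.of k (C ⊗[k] ih)) n

/-- The left action of `B` on `𝒦ⁿ_{(α,β)}(C,B)`:
`b·(c¹⊗⋯⊗cⁿ⊗b') = α(b₍₁₎)c¹β(b₍₂ₙ₊₁₎)⊗⋯⊗α(b₍ₙ₎)cⁿβ(b₍ₙ₊₂₎)⊗b₍ₙ₊₁₎b'`. -/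
def lactB : ∀ n : ℕ, B ⊗[k] (KB k B C n) →ₗ[k] (KB k B C n)
  | 0 => LinearMap.mul' k B
  | n + 1 =>
    (TensorProduct.map (legB k B C l r alpha beta) (lactB n))
      ∘ₗ (TensorProduct.tensorTensorTensorComm k (B ⊗[k] B) B C (KB k B C n)).toLinearMap
      ∘ₗ (TensorProduct.map (sw3 k ∘ₗ Delta2B k B) LinearMap.id)

/-- The product of `𝒦*_{(α,β)}(C,B)`. -/
def muB : ∀ (n m : ℕ), (KB k B C n) ⊗[k] (KB k B C m) →ₗ[k] KB k B C (m + n)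
  | 0, m => lactB k B C l r alpha beta m
  | n + 1, m =>
    (TensorProduct.map LinearMap.id (muB n m))
      ∘ₗ (TensorProduct.assoc k C (KB k B C n) (KB k B C m)).toLinearMap

/-- `b₁ ⊗ b₃ ↦ α(b₁) 𝕀 β(b₃)`. -/
def xiB : B ⊗[k] B →ₗ[k] C :=
  TensorProduct.lift (LinearMap.mk₂ k
    (fun (a b : B) => l (alpha a) (r (beta b) I))
    (fun a a' b => by simp [map_add, LinearMap.add_apply])
    (fun c a b => by simp [map_smul, LinearMap.smul_apply])
    (fun a b b' => by simp [map_add, LinearMap.add_apply])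
    (fun c a b => by simp [map_smul, LinearMap.smul_apply]))

/-- `ρ_B(b) = α(b₍₁₎)𝕀β(b₍₃₎) ⊗ b₍₂₎`. -/
def rhoB : B →ₗ[k] C ⊗[k] B :=
  (TensorProduct.map (xiB k B C l r alpha beta I) LinearMap.id)
    ∘ₗ sw3 k ∘ₗ Delta2B k B

def unrollB (n : ℕ) : (KB k B C (n + 1)) →ₗ[k] C ⊗[k] (KB k B C n) := LinearMap.id

/-- The differential of `𝒦*_{(α,β)}(C,B)`. -/
def dB : ∀ n : ℕ, (KB k B C n) →ₗ[k] (KB k B C (n + 1))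
  | 0 => rhoB k B C l r alpha beta I - (TensorProduct.mk k C B I)
  | n + 1 =>
    ((TensorProduct.assoc k C C (KB k B C n)).toLinearMap
        ∘ₗ (TensorProduct.map DeltaC LinearMap.id))
      - ((TensorProduct.mk k C (C ⊗[k] (KB k B C n))) I)
      - (TensorProduct.map (LinearMap.id : C →ₗ[k] C)
          ((TensorProduct.mk k C (KB k B C n)) I))
      - (TensorProduct.map (LinearMap.id : C →ₗ[k] C)
          (unrollB k B C n ∘ₗ dB n))

def dcastB {a b : ℕ} (h : a = b) : (KB k B C a) →ₗ[k] (KB k B C b) := by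
  subst h; exact LinearMap.id



section Aux

/-- `b ↦ b·𝕀` (right action on the grouplike). -/
def rIx : B →ₗ[k] C := (TensorProduct.lift r) ∘ₗ ((TensorProduct.mk k B C).flip I)

/-- Left-comb iterated comultiplication, 4 legs. -/
def D3x : B →ₗ[k] ((B ⊗[k] B) ⊗[k] B) ⊗[k] B :=
  (TensorProduct.map (Delta2B k B) LinearMap.id) ∘ₗ Coalgebra.comul

/-- Left-comb iterated comultiplication, 5 legs. -/
def D4x : B →ₗ[k] (((B ⊗[k] B) ⊗[k] B) ⊗[k] B) ⊗[k] B :=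
  (TensorProduct.map (D3x k B) LinearMap.id) ∘ₗ Coalgebra.comul

lemma aux_coassoc : (TensorProduct.assoc k B B B).toLinearMap ∘ₗ
    (TensorProduct.map (Coalgebra.comul (R := k) (A := B)) LinearMap.id) ∘ₗ Coalgebra.comul =
    (TensorProduct.map LinearMap.id (Coalgebra.comul (R := k) (A := B))) ∘ₗ Coalgebra.comul :=
  Coalgebra.coassoc

lemma aux_hrImap
    (hbimR : DeltaC ∘ₗ TensorProduct.lift r =
        (TensorProduct.map (TensorProduct.lift r) (TensorProduct.lift r))
          ∘ₗ (TensorProduct.tensorTensorTensorComm k B B C C).toLinearMap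
          ∘ₗ (TensorProduct.map Coalgebra.comul DeltaC))
    (hI : DeltaC I = I ⊗ₜ[k] I) :
    DeltaC ∘ₗ rIx k B C r I
      = TensorProduct.map (rIx k B C r I) (rIx k B C r I)
          ∘ₗ (Coalgebra.comul (R := k) (A := B)) := by
  have haux : (TensorProduct.map (TensorProduct.lift r) (TensorProduct.lift r))
      ∘ₗ (TensorProduct.tensorTensorTensorComm k B B C C).toLinearMap
      ∘ₗ ((TensorProduct.mk k (B ⊗[k] B) (C ⊗[k] C)).flip (I ⊗ₜ[k] I))
    = TensorProduct.map (rIx k B C r I) (rIx k B C r I) := by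
    apply TensorProduct.ext'; intro x y; simp [rIx]
  apply LinearMap.ext; intro b
  have h1 := LinearMap.congr_fun hbimR (b ⊗ₜ[k] I)
  simp only [LinearMap.comp_apply, LinearEquiv.coe_coe, TensorProduct.map_tmul, hI,
    LinearMap.id_coe, id_eq] at h1 ⊢
  have h2 := LinearMap.congr_fun haux (Coalgebra.comul (R := k) (A := B) b)
  simp only [LinearMap.comp_apply, LinearEquiv.coe_coe, TensorProduct.mk_apply,
    LinearMap.flip_apply] at h2
  have h3 : rIx k B C r I b = TensorProduct.lift r (b ⊗ₜ[k] I) := by simp [rIx]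
  rw [h3, h1, ← h2]

lemma aux_hkey
    (hbimL : DeltaC ∘ₗ TensorProduct.lift l =
        (TensorProduct.map (TensorProduct.lift l) (TensorProduct.lift l))
          ∘ₗ (TensorProduct.tensorTensorTensorComm k B B C C).toLinearMap
          ∘ₗ (TensorProduct.map Coalgebra.comul DeltaC))
    (hbimR : DeltaC ∘ₗ TensorProduct.lift r =
        (TensorProduct.map (TensorProduct.lift r) (TensorProduct.lift r))
          ∘ₗ (TensorProduct.tensorTensorTensorComm k B B C C).toLinearMap
          ∘ₗ (TensorProduct.map Coalgebra.comul DeltaC))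
    (hI : DeltaC I = I ⊗ₜ[k] I)
    (hac : Coalgebra.comul ∘ₗ alpha = (TensorProduct.map alpha alpha) ∘ₗ Coalgebra.comul)
    (hbc : Coalgebra.comul ∘ₗ beta =
        (TensorProduct.comm k B B).toLinearMap
          ∘ₗ (TensorProduct.map beta beta) ∘ₗ Coalgebra.comul) :
    DeltaC ∘ₗ xiB k B C l r alpha beta I
      = (TensorProduct.map (xiB k B C l r alpha beta I) (xiB k B C l r alpha beta I)
          ∘ₗ (TensorProduct.tensorTensorTensorComm k B B B B).toLinearMap
          ∘ₗ TensorProduct.map LinearMap.id (TensorProduct.comm k B B).toLinearMap)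
        ∘ₗ TensorProduct.map (Coalgebra.comul (R := k) (A := B))
            (Coalgebra.comul (R := k) (A := B)) := by
  have hrImap := aux_hrImap k B C DeltaC r I hbimR hI
  have hbil :
    TensorProduct.map (TensorProduct.lift l) (TensorProduct.lift l)
      ∘ₗ (TensorProduct.tensorTensorTensorComm k B B C C).toLinearMap
      ∘ₗ TensorProduct.map (TensorProduct.map alpha alpha)
          ((TensorProduct.map (rIx k B C r I) (rIx k B C r I))
            ∘ₗ (TensorProduct.comm k B B).toLinearMap
            ∘ₗ TensorProduct.map beta beta)
    = TensorProduct.map (xiB k B C l r alpha beta I) (xiB k B C l r alpha beta I)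
      ∘ₗ (TensorProduct.tensorTensorTensorComm k B B B B).toLinearMap
      ∘ₗ TensorProduct.map LinearMap.id (TensorProduct.comm k B B).toLinearMap := by
    ext a b c d
    simp [rIx, xiB]
  apply TensorProduct.ext'
  intro x y
  have e0 : xiB k B C l r alpha beta I (x ⊗ₜ[k] y)
      = TensorProduct.lift l (alpha x ⊗ₜ[k] rIx k B C r I (beta y)) := by simp [xiB, rIx]
  have e1 := LinearMap.congr_fun hbimL (alpha x ⊗ₜ[k] rIx k B C r I (beta y))
  simp only [LinearMap.comp_apply, LinearEquiv.coe_coe, TensorProduct.map_tmul] at e1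
  have e2 : Coalgebra.comul (R := k) (alpha x)
      = TensorProduct.map alpha alpha (Coalgebra.comul x) := by
    simpa [LinearMap.comp_apply] using LinearMap.congr_fun hac x
  have e3 : DeltaC (rIx k B C r I (beta y))
      = TensorProduct.map (rIx k B C r I) (rIx k B C r I)
          ((TensorProduct.comm k B B) (TensorProduct.map beta beta (Coalgebra.comul y))) := by
    have h4 := LinearMap.congr_fun hrImap (beta y)
    simp only [LinearMap.comp_apply] at h4
    rw [h4]
    have h5 := LinearMap.congr_fun hbc y
    simp only [LinearMap.comp_apply, LinearEquiv.coe_coe] at h5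
    rw [h5]
  have e4 := LinearMap.congr_fun hbil
    ((Coalgebra.comul (R := k) x) ⊗ₜ[k] (Coalgebra.comul (R := k) y))
  simp only [LinearMap.comp_apply, LinearEquiv.coe_coe, TensorProduct.map_tmul,
    LinearMap.id_coe, id_eq] at e4 ⊢
  rw [e0, e1, e2, e3]
  exact e4

lemma aux_hK1 : TensorProduct.map (Delta2B k B) (Coalgebra.comul (R := k) (A := B))
      ∘ₗ Coalgebra.comul
    = (TensorProduct.assoc k ((B ⊗[k] B) ⊗[k] B) B B).toLinearMap ∘ₗ D4x k B := by
  have hnat3 : TensorProduct.map (Delta2B k B) (LinearMap.id : B ⊗[k] B →ₗ[k] B ⊗[k] B)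
        ∘ₗ (TensorProduct.assoc k B B B).toLinearMap
      = (TensorProduct.assoc k ((B ⊗[k] B) ⊗[k] B) B B).toLinearMap
        ∘ₗ TensorProduct.map (TensorProduct.map (Delta2B k B) LinearMap.id) LinearMap.id := by
    ext a b c; rfl
  have s0 : TensorProduct.map (Delta2B k B) (Coalgebra.comul (R := k) (A := B))
      = TensorProduct.map (Delta2B k B) LinearMap.id
        ∘ₗ TensorProduct.map LinearMap.id (Coalgebra.comul (R := k) (A := B)) := by
    rw [← TensorProduct.map_comp]; simp
  apply LinearMap.ext; intro x
  have hcox := LinearMap.congr_fun (aux_coassoc k B) x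
  simp only [LinearMap.comp_apply, LinearEquiv.coe_coe] at hcox ⊢
  rw [s0]
  simp only [LinearMap.comp_apply]
  rw [← hcox]
  have s2 := LinearMap.congr_fun hnat3
    (TensorProduct.map (Coalgebra.comul (R := k) (A := B)) LinearMap.id (Coalgebra.comul x))
  simp only [LinearMap.comp_apply, LinearEquiv.coe_coe] at s2
  rw [s2]
  congr 1
  show _ = TensorProduct.map (D3x k B) LinearMap.id (Coalgebra.comul x)
  rw [← LinearMap.comp_apply
    (TensorProduct.map (TensorProduct.map (Delta2B k B) LinearMap.id) LinearMap.id),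
    ← TensorProduct.map_comp]
  rfl

lemma aux_hD3r : TensorProduct.map LinearMap.id (Delta2B k B) ∘ₗ Coalgebra.comul
    = (TensorProduct.assoc k B (B ⊗[k] B) B).toLinearMap
      ∘ₗ TensorProduct.map (TensorProduct.assoc k B B B).toLinearMap LinearMap.id
      ∘ₗ D3x k B := by
  have hnat4 : TensorProduct.map (LinearMap.id : B →ₗ[k] B)
        (TensorProduct.map (Coalgebra.comul (R := k) (A := B)) LinearMap.id)
        ∘ₗ (TensorProduct.assoc k B B B).toLinearMap
      = (TensorProduct.assoc k B (B ⊗[k] B) B).toLinearMap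
        ∘ₗ TensorProduct.map
            (TensorProduct.map LinearMap.id (Coalgebra.comul (R := k) (A := B)))
            LinearMap.id := by
    ext a b c; rfl
  have s0 : TensorProduct.map (LinearMap.id : B →ₗ[k] B) (Delta2B k B)
      = TensorProduct.map LinearMap.id
          (TensorProduct.map (Coalgebra.comul (R := k) (A := B)) LinearMap.id)
        ∘ₗ TensorProduct.map LinearMap.id (Coalgebra.comul (R := k) (A := B)) := by
    rw [← TensorProduct.map_comp]; simp [Delta2B]
  apply LinearMap.ext; intro x
  have hcox := LinearMap.congr_fun (aux_coassoc k B) x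
  simp only [LinearMap.comp_apply, LinearEquiv.coe_coe] at hcox ⊢
  rw [s0]
  simp only [LinearMap.comp_apply]
  rw [← hcox]
  have s2 := LinearMap.congr_fun hnat4
    (TensorProduct.map (Coalgebra.comul (R := k) (A := B)) LinearMap.id (Coalgebra.comul x))
  simp only [LinearMap.comp_apply, LinearEquiv.coe_coe] at s2
  rw [s2]
  congr 1
  rw [← LinearMap.comp_apply
    (TensorProduct.map (TensorProduct.map LinearMap.id (Coalgebra.comul (R := k) (A := B)))
      LinearMap.id),
    ← TensorProduct.map_comp]
  have s3 : (TensorProduct.map (LinearMap.id : B →ₗ[k] B) (Coalgebra.comul (R := k) (A := B)))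
      ∘ₗ (Coalgebra.comul (R := k) (A := B))
      = (TensorProduct.assoc k B B B).toLinearMap ∘ₗ Delta2B k B := (aux_coassoc k B).symm
  rw [s3, TensorProduct.map_comp]
  rfl

lemma aux_hK2 : TensorProduct.map
      (TensorProduct.map LinearMap.id (Delta2B k B) ∘ₗ Coalgebra.comul)
      (LinearMap.id : B →ₗ[k] B) ∘ₗ Coalgebra.comul
    = TensorProduct.map
        ((TensorProduct.assoc k B (B ⊗[k] B) B).toLinearMap
          ∘ₗ TensorProduct.map (TensorProduct.assoc k B B B).toLinearMap LinearMap.id)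
        LinearMap.id ∘ₗ D4x k B := by
  have fold : TensorProduct.map
        ((TensorProduct.assoc k B (B ⊗[k] B) B).toLinearMap
          ∘ₗ TensorProduct.map (TensorProduct.assoc k B B B).toLinearMap LinearMap.id
          ∘ₗ D3x k B) (LinearMap.id : B →ₗ[k] B)
      = TensorProduct.map
          ((TensorProduct.assoc k B (B ⊗[k] B) B).toLinearMap
            ∘ₗ TensorProduct.map (TensorProduct.assoc k B B B).toLinearMap LinearMap.id)
          LinearMap.id ∘ₗ TensorProduct.map (D3x k B) LinearMap.id := by
    rw [← TensorProduct.map_comp]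
    congr 1
  rw [aux_hD3r, fold, D4x, LinearMap.comp_assoc]

lemma aux_hfin (xi : B ⊗[k] B →ₗ[k] C) :
    ((TensorProduct.assoc k C C B).toLinearMap
      ∘ₗ TensorProduct.map
          (TensorProduct.map xi xi
            ∘ₗ (TensorProduct.tensorTensorTensorComm k B B B B).toLinearMap
            ∘ₗ TensorProduct.map LinearMap.id (TensorProduct.comm k B B).toLinearMap)
          (LinearMap.id : B →ₗ[k] B))
      ∘ₗ sw3 k
      ∘ₗ (TensorProduct.assoc k ((B ⊗[k] B) ⊗[k] B) B B).toLinearMap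
    = (TensorProduct.map xi (TensorProduct.map xi LinearMap.id ∘ₗ sw3 k))
      ∘ₗ sw3 k
      ∘ₗ TensorProduct.map
          ((TensorProduct.assoc k B (B ⊗[k] B) B).toLinearMap
            ∘ₗ TensorProduct.map (TensorProduct.assoc k B B B).toLinearMap LinearMap.id)
          (LinearMap.id : B →ₗ[k] B) := by
  ext a b c d e
  simp [sw3]

lemma aux_hnat1 (f g : B →ₗ[k] B ⊗[k] B) :
    TensorProduct.map (TensorProduct.map f g) (LinearMap.id : B →ₗ[k] B) ∘ₗ sw3 k
    = sw3 k ∘ₗ TensorProduct.map (TensorProduct.map f LinearMap.id) g := by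
  ext a b c; simp [sw3]

lemma aux_hnat2 (g : B →ₗ[k] (B ⊗[k] B) ⊗[k] B) :
    TensorProduct.map (LinearMap.id : B ⊗[k] B →ₗ[k] B ⊗[k] B) g ∘ₗ sw3 k
    = sw3 k ∘ₗ TensorProduct.map (TensorProduct.map LinearMap.id g) LinearMap.id := by
  ext a b c; simp [sw3]

end Aux

theorem statement18
    -- `C` is a coalgebra:
    (epsC : C →ₗ[k] k)
    (hDc : (TensorProduct.assoc k C C C).toLinearMap ∘ₗ
        (TensorProduct.map DeltaC LinearMap.id) ∘ₗ DeltaC =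
        (TensorProduct.map LinearMap.id DeltaC) ∘ₗ DeltaC)
    (hCe1 : (TensorProduct.lid k C).toLinearMap ∘ₗ
        (TensorProduct.map epsC LinearMap.id) ∘ₗ DeltaC = LinearMap.id)
    (hCe2 : (TensorProduct.rid k C).toLinearMap ∘ₗ
        (TensorProduct.map LinearMap.id epsC) ∘ₗ DeltaC = LinearMap.id)
    -- `C` is a `B`-bimodule:
    (hl1 : l 1 = LinearMap.id) (hlm : ∀ a b : B, l (a * b) = l a ∘ₗ l b)
    (hr1 : r 1 = LinearMap.id) (hrm : ∀ a b : B, r (a * b) = r b ∘ₗ r a)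
    (hlr : ∀ a b : B, l a ∘ₗ r b = r b ∘ₗ l a)
    -- `Δ_C` is a morphism of `B`-bimodules (diagonal actions):
    (hbimL : DeltaC ∘ₗ TensorProduct.lift l =
        (TensorProduct.map (TensorProduct.lift l) (TensorProduct.lift l))
          ∘ₗ (TensorProduct.tensorTensorTensorComm k B B C C).toLinearMap
          ∘ₗ (TensorProduct.map Coalgebra.comul DeltaC))
    (hbimR : DeltaC ∘ₗ TensorProduct.lift r =
        (TensorProduct.map (TensorProduct.lift r) (TensorProduct.lift r))
          ∘ₗ (TensorProduct.tensorTensorTensorComm k B B C C).toLinearMap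
          ∘ₗ (TensorProduct.map Coalgebra.comul DeltaC))
    -- `𝕀` is a grouplike element of `C`:
    (hI : DeltaC I = I ⊗ₜ[k] I)
    -- `α : B → B` is a morphism of bialgebras:
    (ha1 : alpha 1 = 1) (ham : ∀ a b : B, alpha (a * b) = alpha a * alpha b)
    (hac : Coalgebra.comul ∘ₗ alpha = (TensorProduct.map alpha alpha) ∘ₗ Coalgebra.comul)
    (hae : Coalgebra.counit ∘ₗ alpha = (Coalgebra.counit : B →ₗ[k] k))
    -- `β : B → B^{op,cop}` is a morphism of bialgebras:
    (hb1 : beta 1 = 1) (hbm : ∀ a b : B, beta (a * b) = beta b * beta a)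
    (hbc : Coalgebra.comul ∘ₗ beta =
        (TensorProduct.comm k B B).toLinearMap
          ∘ₗ (TensorProduct.map beta beta) ∘ₗ Coalgebra.comul)
    (hbe : Coalgebra.counit ∘ₗ beta = (Coalgebra.counit : B →ₗ[k] k))
    :
    -- coassociativity of `ρ_B` as a `C`-comodule structure on `B`:
    (TensorProduct.assoc k C C B).toLinearMap
        ∘ₗ (TensorProduct.map DeltaC LinearMap.id)
        ∘ₗ rhoB k B C l r alpha beta I =
      (TensorProduct.map LinearMap.id (rhoB k B C l r alpha beta I))
        ∘ₗ rhoB k B C l r alpha beta I := by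
  set ξ := xiB k B C l r alpha beta I with hξdef
  have hkey := aux_hkey k B C DeltaC l r alpha beta I hbimL hbimR hI hac hbc
  have hK1 := aux_hK1 k B
  have hK2 := aux_hK2 k B
  have hfin := aux_hfin k B C ξ
  have hnat1 := aux_hnat1 k B (Coalgebra.comul (R := k) (A := B))
    (Coalgebra.comul (R := k) (A := B))
  have hnat2 := aux_hnat2 k B (Delta2B k B)
  have hD2eq : Delta2B k B
      = TensorProduct.map (Coalgebra.comul (R := k) (A := B)) LinearMap.id
        ∘ₗ Coalgebra.comul := rfl
  have foldL1 : TensorProduct.map DeltaC (LinearMap.id : B →ₗ[k] B)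
        ∘ₗ TensorProduct.map ξ LinearMap.id
      = TensorProduct.map (DeltaC ∘ₗ ξ) LinearMap.id := by
    rw [← TensorProduct.map_comp, LinearMap.id_comp]
  have foldL2 : TensorProduct.map
        ((TensorProduct.map ξ ξ
          ∘ₗ (TensorProduct.tensorTensorTensorComm k B B B B).toLinearMap
          ∘ₗ TensorProduct.map LinearMap.id (TensorProduct.comm k B B).toLinearMap)
        ∘ₗ TensorProduct.map (Coalgebra.comul (R := k) (A := B))
            (Coalgebra.comul (R := k) (A := B))) (LinearMap.id : B →ₗ[k] B)
      = TensorProduct.map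
          (TensorProduct.map ξ ξ
            ∘ₗ (TensorProduct.tensorTensorTensorComm k B B B B).toLinearMap
            ∘ₗ TensorProduct.map LinearMap.id (TensorProduct.comm k B B).toLinearMap)
          LinearMap.id
        ∘ₗ TensorProduct.map
            (TensorProduct.map (Coalgebra.comul (R := k) (A := B))
              (Coalgebra.comul (R := k) (A := B))) LinearMap.id := by
    rw [← TensorProduct.map_comp, LinearMap.id_comp]
  have foldL3 : TensorProduct.map
        (TensorProduct.map (Coalgebra.comul (R := k) (A := B)) LinearMap.id)
        (Coalgebra.comul (R := k) (A := B)) ∘ₗ Delta2B k B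
      = TensorProduct.map (Delta2B k B) (Coalgebra.comul (R := k) (A := B))
        ∘ₗ Coalgebra.comul := by
    rw [hD2eq, ← LinearMap.comp_assoc, ← TensorProduct.map_comp, LinearMap.comp_id]
  have foldR1 : TensorProduct.map (LinearMap.id : C →ₗ[k] C)
        (rhoB k B C l r alpha beta I) ∘ₗ TensorProduct.map ξ LinearMap.id
      = TensorProduct.map ξ (rhoB k B C l r alpha beta I) := by
    rw [← TensorProduct.map_comp, LinearMap.id_comp, LinearMap.comp_id]
  have foldR2 : TensorProduct.map ξ (rhoB k B C l r alpha beta I)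
      = TensorProduct.map ξ (TensorProduct.map ξ LinearMap.id ∘ₗ sw3 k)
        ∘ₗ TensorProduct.map LinearMap.id (Delta2B k B) := by
    rw [← TensorProduct.map_comp, LinearMap.comp_id]
    rfl
  have foldR3 : TensorProduct.map
        (TensorProduct.map (LinearMap.id : B →ₗ[k] B) (Delta2B k B)) LinearMap.id
        ∘ₗ Delta2B k B
      = TensorProduct.map
          (TensorProduct.map LinearMap.id (Delta2B k B) ∘ₗ Coalgebra.comul)
          (LinearMap.id : B →ₗ[k] B) ∘ₗ Coalgebra.comul := by
    rw [hD2eq, ← LinearMap.comp_assoc, ← TensorProduct.map_comp, LinearMap.id_comp]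
  apply LinearMap.ext; intro b
  have hrho : rhoB k B C l r alpha beta I b
      = TensorProduct.map ξ LinearMap.id (sw3 k (Delta2B k B b)) := rfl
  simp only [LinearMap.comp_apply, LinearEquiv.coe_coe]
  rw [hrho]
  rw [← LinearMap.comp_apply (TensorProduct.map DeltaC LinearMap.id), foldL1, hkey, foldL2]
  rw [LinearMap.comp_apply, ← LinearMap.comp_apply
      (TensorProduct.map
        (TensorProduct.map (Coalgebra.comul (R := k) (A := B))
          (Coalgebra.comul (R := k) (A := B))) LinearMap.id) (sw3 k), hnat1]
  rw [LinearMap.comp_apply, ← LinearMap.comp_apply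
      (TensorProduct.map (TensorProduct.map (Coalgebra.comul (R := k) (A := B)) LinearMap.id)
        (Coalgebra.comul (R := k) (A := B))) (Delta2B k B), foldL3]
  rw [LinearMap.comp_apply, ← LinearMap.comp_apply
      (TensorProduct.map (Delta2B k B) (Coalgebra.comul (R := k) (A := B)))
      Coalgebra.comul, hK1]
  rw [← LinearMap.comp_apply (TensorProduct.map LinearMap.id (rhoB k B C l r alpha beta I)),
    foldR1, foldR2]
  rw [LinearMap.comp_apply
      (TensorProduct.map ξ (TensorProduct.map ξ LinearMap.id ∘ₗ sw3 k))
      (TensorProduct.map LinearMap.id (Delta2B k B)),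
    ← LinearMap.comp_apply
      (TensorProduct.map (LinearMap.id : B ⊗[k] B →ₗ[k] B ⊗[k] B) (Delta2B k B))
      (sw3 k), hnat2]
  rw [LinearMap.comp_apply (sw3 k)
      (TensorProduct.map (TensorProduct.map LinearMap.id (Delta2B k B)) LinearMap.id),
    ← LinearMap.comp_apply
      (TensorProduct.map (TensorProduct.map LinearMap.id (Delta2B k B)) LinearMap.id)
      (Delta2B k B), foldR3]
  rw [hK2]
  have hfb := LinearMap.congr_fun hfin (D4x k B b)
  simp only [LinearMap.comp_apply, LinearEquiv.coe_coe] at hfb ⊢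
  exact hfb


end
end

section
/- Let X be a B-module and a k-linear map ρ_X : X → C⊗X, and set ∇(x) = ρ_X(x) − 𝕀⊗x. Then ∇ is a flat connection with respect to 𝒦*_{(α,β)}(C,B) if and only if ρ_X is a coassociative C-coaction satisfying the (α,β)-equivariance condition ρ_X(bx) = α(b₍₁₎) x₍₋₁₎ β(b₍₃₎) ⊗ b₍₂₎ x₍₀₎ for all b ∈ B, x ∈ X. -/
set_option synthInstance.maxHeartbeats 400000
set_option maxHeartbeats 1000000


/- STATEMENT 19: Let X be a B-module with a k-linear map ρ_X : X → C⊗X, and set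
∇(x) = ρ_X(x) − 𝕀⊗x. Then ∇ is a flat connection with respect to 𝒦*_{(α,β)}(C,B)
iff ρ_X is a coassociative C-coaction satisfying the (α,β)-equivariance condition
ρ_X(bx) = α(b₍₁₎) x₍₋₁₎ β(b₍₃₎) ⊗ b₍₂₎ x₍₀₎. -/

open TensorProduct

noncomputable section

variable (k : Type) [Field k] (B : Type) [Ring B] [Bialgebra k B]
variable (C : Type) [AddCommGroup C] [Module k C]
variable (DeltaC : C →ₗ[k] C ⊗[k] C)
variable (l : B →ₗ[k] C →ₗ[k] C) (r : B →ₗ[k] C →ₗ[k] C)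
variable (alpha : B →ₗ[k] B) (beta : B →ₗ[k] B) (I : C)

variable {A A' A'' : Type} [AddCommGroup A] [AddCommGroup A'] [AddCommGroup A'']
  [Module k A] [Module k A'] [Module k A'']

variable (X : Type) [AddCommGroup X] [Module k X] [Module B X]
  [IsScalarTower k B X] [SMulCommClass B k X]

def actMapB : B ⊗[k] X →ₗ[k] X :=
  TensorProduct.lift (LinearMap.mk₂ k (fun (b : B) (x : X) => b • x)
    (fun h h' x => add_smul h h' x)
    (fun c h x => smul_assoc c h x)
    (fun h x y => smul_add h x y)
    (fun c h x => smul_comm h c x))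

/-- The action of `B` on `𝒦¹ ⊗_B X ≅ C ⊗ X` : `b·(c⊗x) = α(b₍₁₎)cβ(b₍₃₎) ⊗ b₍₂₎x`. -/
def twistCB : B ⊗[k] (C ⊗[k] X) →ₗ[k] C ⊗[k] X :=
  (TensorProduct.map (legB k B C l r alpha beta) (actMapB k B X))
    ∘ₗ (TensorProduct.tensorTensorTensorComm k (B ⊗[k] B) B C X).toLinearMap
    ∘ₗ (TensorProduct.map (sw3 k ∘ₗ Delta2B k B) LinearMap.id)

/-- `(c ⊗ b) ⊗ x ↦ c ⊗ bx`, i.e. `ω ⊗_B x` under `𝒦¹ ⊗_B X ≅ C ⊗ X`. -/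
def pairCB : (C ⊗[k] B) ⊗[k] X →ₗ[k] C ⊗[k] X :=
  (TensorProduct.map LinearMap.id (actMapB k B X))
    ∘ₗ (TensorProduct.assoc k C B X).toLinearMap

/-- `c ↦ d(c ⊗ 1) ∈ 𝒦²`. -/
def AcB : C →ₗ[k] KB k B C 2 :=
  dB k B C DeltaC l r alpha beta I 1 ∘ₗ ((TensorProduct.mk k C B).flip 1)

/-- `𝒦² ⊗_B X ≅ C ⊗ (C ⊗ X)`. -/
def iotaB2 : (C ⊗[k] (C ⊗[k] B)) ⊗[k] X →ₗ[k] C ⊗[k] (C ⊗[k] X) :=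
  (TensorProduct.map LinearMap.id (TensorProduct.map LinearMap.id (actMapB k B X)))
    ∘ₗ (TensorProduct.map LinearMap.id (TensorProduct.assoc k C B X).toLinearMap)
    ∘ₗ (TensorProduct.assoc k C (C ⊗[k] B) X).toLinearMap

/-- The extended connection `∇̂(c⊗x) = d(c⊗1) ⊗_B x − (c⊗1)·∇(x)`. -/
def nablaHatB (nabla : X →ₗ[k] C ⊗[k] X) : C ⊗[k] X →ₗ[k] C ⊗[k] (C ⊗[k] X) :=
  (iotaB2 k B C X
      ∘ₗ (TensorProduct.map (AcB k B C DeltaC l r alpha beta I) LinearMap.id))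
    - (TensorProduct.map LinearMap.id nabla)

lemma aux_AcB (ha1 : alpha 1 = 1) (hb1 : beta 1 = 1) (hl1 : l 1 = LinearMap.id)
    (hr1 : r 1 = LinearMap.id) (c : C) :
    AcB k B C DeltaC l r alpha beta I c =
      (TensorProduct.assoc k C C B) (DeltaC c ⊗ₜ[k] (1:B))
        - I ⊗ₜ[k] (c ⊗ₜ[k] (1:B)) - c ⊗ₜ[k] (I ⊗ₜ[k] (1:B)) := by
  have h1 : rhoB k B C l r alpha beta I 1 = I ⊗ₜ[k] 1 := by
    simp [rhoB, Delta2B, sw3, xiB, Algebra.TensorProduct.one_def, ha1, hb1, hl1, hr1]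
  show (((TensorProduct.assoc k C C B).toLinearMap ∘ₗ (TensorProduct.map DeltaC LinearMap.id))
      - ((TensorProduct.mk k C (C ⊗[k] B)) I)
      - (TensorProduct.map (LinearMap.id : C →ₗ[k] C) ((TensorProduct.mk k C B) I))
      - (TensorProduct.map (LinearMap.id : C →ₗ[k] C)
          (rhoB k B C l r alpha beta I - (TensorProduct.mk k C B) I)) :
      C ⊗[k] B →ₗ[k] C ⊗[k] (C ⊗[k] B)) (c ⊗ₜ[k] (1:B)) = _
  simp [h1]

lemma aux_twistI (b : B) (x : X) :
    twistCB k B C l r alpha beta X (b ⊗ₜ[k] (I ⊗ₜ[k] x)) =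
      pairCB k B C X ((rhoB k B C l r alpha beta I b) ⊗ₜ[k] x) := by
  have legI : ∀ p : B ⊗[k] B, legB k B C l r alpha beta (p ⊗ₜ[k] I) =
      xiB k B C l r alpha beta I p := by
    intro p
    induction p using TensorProduct.induction_on with
    | zero => simp
    | tmul a b => simp [legB, xiB]
    | add u v hu hv => simp [add_tmul, hu, hv]
  have key : ∀ t : (B ⊗[k] B) ⊗[k] B,
      (TensorProduct.map (legB k B C l r alpha beta) (actMapB k B X))
        ((TensorProduct.tensorTensorTensorComm k (B ⊗[k] B) B C X) (t ⊗ₜ[k] (I ⊗ₜ[k] x))) =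
      pairCB k B C X
        ((TensorProduct.map (xiB k B C l r alpha beta I) LinearMap.id t) ⊗ₜ[k] x) := by
    intro t
    induction t using TensorProduct.induction_on with
    | zero => rw [TensorProduct.zero_tmul]; simp
    | tmul p b' => simp [legI, pairCB, actMapB]
    | add u v hu hv => simp [add_tmul, hu, hv]
  simpa [twistCB, rhoB] using key (sw3 k (Delta2B k B b))

lemma aux_hhat (ha1 : alpha 1 = 1) (hb1 : beta 1 = 1) (hl1 : l 1 = LinearMap.id)
    (hr1 : r 1 = LinearMap.id) (nabla : X →ₗ[k] C ⊗[k] X) :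
    nablaHatB k B C DeltaC l r alpha beta I X nabla =
      ((TensorProduct.assoc k C C X).toLinearMap ∘ₗ (TensorProduct.map DeltaC LinearMap.id))
        - (TensorProduct.mk k C (C ⊗[k] X)) I
        - TensorProduct.map (LinearMap.id : C →ₗ[k] C) ((TensorProduct.mk k C X) I)
        - TensorProduct.map (LinearMap.id : C →ₗ[k] C) nabla := by
  apply TensorProduct.ext'
  intro c x
  show iotaB2 k B C X ((AcB k B C DeltaC l r alpha beta I c) ⊗ₜ[k] x)
      - (TensorProduct.map LinearMap.id nabla) (c ⊗ₜ[k] x) = _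
  rw [aux_AcB k B C DeltaC l r alpha beta I ha1 hb1 hl1 hr1 c]
  have hiota : ∀ t : C ⊗[k] C,
      iotaB2 k B C X (((TensorProduct.assoc k C C B) (t ⊗ₜ[k] (1:B))) ⊗ₜ[k] x) =
      (TensorProduct.assoc k C C X) (t ⊗ₜ[k] x) := by
    intro t
    induction t using TensorProduct.induction_on with
    | zero => rw [TensorProduct.zero_tmul, map_zero, TensorProduct.zero_tmul, map_zero,
        TensorProduct.zero_tmul, map_zero]
    | tmul a b => simp [iotaB2, actMapB]
    | add u v hu hv => rw [TensorProduct.add_tmul, map_add, TensorProduct.add_tmul, map_add,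
        TensorProduct.add_tmul, map_add, hu, hv]
  rw [TensorProduct.sub_tmul, TensorProduct.sub_tmul, map_sub, map_sub, hiota]
  simp [iotaB2, actMapB, LinearMap.sub_apply]

theorem statement19
    -- `C` is a coalgebra:
    (epsC : C →ₗ[k] k)
    (hDc : (TensorProduct.assoc k C C C).toLinearMap ∘ₗ
        (TensorProduct.map DeltaC LinearMap.id) ∘ₗ DeltaC =
        (TensorProduct.map LinearMap.id DeltaC) ∘ₗ DeltaC)
    (hCe1 : (TensorProduct.lid k C).toLinearMap ∘ₗ
        (TensorProduct.map epsC LinearMap.id) ∘ₗ DeltaC = LinearMap.id)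
    (hCe2 : (TensorProduct.rid k C).toLinearMap ∘ₗ
        (TensorProduct.map LinearMap.id epsC) ∘ₗ DeltaC = LinearMap.id)
    -- `C` is a `B`-bimodule:
    (hl1 : l 1 = LinearMap.id) (hlm : ∀ a b : B, l (a * b) = l a ∘ₗ l b)
    (hr1 : r 1 = LinearMap.id) (hrm : ∀ a b : B, r (a * b) = r b ∘ₗ r a)
    (hlr : ∀ a b : B, l a ∘ₗ r b = r b ∘ₗ l a)
    -- `Δ_C` is a morphism of `B`-bimodules (diagonal actions):
    (hbimL : DeltaC ∘ₗ TensorProduct.lift l =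
        (TensorProduct.map (TensorProduct.lift l) (TensorProduct.lift l))
          ∘ₗ (TensorProduct.tensorTensorTensorComm k B B C C).toLinearMap
          ∘ₗ (TensorProduct.map Coalgebra.comul DeltaC))
    (hbimR : DeltaC ∘ₗ TensorProduct.lift r =
        (TensorProduct.map (TensorProduct.lift r) (TensorProduct.lift r))
          ∘ₗ (TensorProduct.tensorTensorTensorComm k B B C C).toLinearMap
          ∘ₗ (TensorProduct.map Coalgebra.comul DeltaC))
    -- `𝕀` is a grouplike element of `C`:
    (hI : DeltaC I = I ⊗ₜ[k] I)
    -- `α : B → B` is a morphism of bialgebras: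
    (ha1 : alpha 1 = 1) (ham : ∀ a b : B, alpha (a * b) = alpha a * alpha b)
    (hac : Coalgebra.comul ∘ₗ alpha = (TensorProduct.map alpha alpha) ∘ₗ Coalgebra.comul)
    (hae : Coalgebra.counit ∘ₗ alpha = (Coalgebra.counit : B →ₗ[k] k))
    -- `β : B → B^{op,cop}` is a morphism of bialgebras:
    (hb1 : beta 1 = 1) (hbm : ∀ a b : B, beta (a * b) = beta b * beta a)
    (hbc : Coalgebra.comul ∘ₗ beta =
        (TensorProduct.comm k B B).toLinearMap
          ∘ₗ (TensorProduct.map beta beta) ∘ₗ Coalgebra.comul)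
    (hbe : Coalgebra.counit ∘ₗ beta = (Coalgebra.counit : B →ₗ[k] k))
    (nabla : X →ₗ[k] C ⊗[k] X) :
    -- `∇` is a connection (Leibniz rule) which is flat …
    ((∀ (b : B) (x : X),
        nabla (b • x) =
          twistCB k B C l r alpha beta X (b ⊗ₜ[k] nabla x)
            + pairCB k B C X
                ((dB k B C DeltaC l r alpha beta I 0 b) ⊗ₜ[k] x)) ∧
      (∀ x : X,
        nablaHatB k B C DeltaC l r alpha beta I X nabla (nabla x) = 0))
    ↔
    -- … iff `ρ_X := ∇ + 𝕀⊗·` is a coassociative `C`-coaction satisfying the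
    -- `(α,β)`-equivariance condition:
    (((TensorProduct.assoc k C C X).toLinearMap
        ∘ₗ (TensorProduct.map DeltaC LinearMap.id)
        ∘ₗ (nabla + (TensorProduct.mk k C X) I) =
      (TensorProduct.map LinearMap.id (nabla + (TensorProduct.mk k C X) I))
        ∘ₗ (nabla + (TensorProduct.mk k C X) I)) ∧
     (∀ (b : B) (x : X),
        (nabla + (TensorProduct.mk k C X) I) (b • x) =
          twistCB k B C l r alpha beta X
            (b ⊗ₜ[k] (nabla + (TensorProduct.mk k C X) I) x))) := by
  have leib_iff : ∀ (b : B) (x : X),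
      (nabla (b • x) =
          twistCB k B C l r alpha beta X (b ⊗ₜ[k] nabla x)
            + pairCB k B C X ((dB k B C DeltaC l r alpha beta I 0 b) ⊗ₜ[k] x)) ↔
      ((nabla + (TensorProduct.mk k C X) I) (b • x) =
          twistCB k B C l r alpha beta X
            (b ⊗ₜ[k] (nabla + (TensorProduct.mk k C X) I) x)) := by
    intro b x
    have d0eq : dB k B C DeltaC l r alpha beta I 0 b
        = rhoB k B C l r alpha beta I b - I ⊗ₜ[k] b := rfl
    have hIb : pairCB k B C X ((I ⊗ₜ[k] b) ⊗ₜ[k] x) = I ⊗ₜ[k] (b • x) := by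
      simp [pairCB, actMapB]
    rw [d0eq, TensorProduct.sub_tmul, map_sub, hIb, ← aux_twistI k B C l r alpha beta I X b x,
      LinearMap.add_apply, LinearMap.add_apply, TensorProduct.mk_apply, TensorProduct.mk_apply,
      TensorProduct.tmul_add, map_add, ← add_sub_assoc, eq_sub_iff_add_eq]
  have hhat := aux_hhat k B C DeltaC l r alpha beta I X ha1 hb1 hl1 hr1 nabla
  have key : ∀ x : X, nablaHatB k B C DeltaC l r alpha beta I X nabla (nabla x) =
      ((TensorProduct.assoc k C C X).toLinearMap
          ∘ₗ (TensorProduct.map DeltaC LinearMap.id)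
          ∘ₗ (nabla + (TensorProduct.mk k C X) I)) x
        - ((TensorProduct.map LinearMap.id (nabla + (TensorProduct.mk k C X) I))
            ∘ₗ (nabla + (TensorProduct.mk k C X) I)) x := by
    intro x
    rw [hhat, TensorProduct.map_add_right]
    have e1 : (TensorProduct.map DeltaC (LinearMap.id : X →ₗ[k] X)) (I ⊗ₜ[k] x)
        = (I ⊗ₜ[k] I) ⊗ₜ[k] x := by simp [hI]
    have e2 : (TensorProduct.assoc k C C X) ((I ⊗ₜ[k] I) ⊗ₜ[k] x) = I ⊗ₜ[k] (I ⊗ₜ[k] x) := rfl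
    simp only [LinearMap.sub_apply, LinearMap.add_apply, LinearMap.coe_comp,
      Function.comp_apply, TensorProduct.mk_apply, map_add, e1, e2,
      TensorProduct.map_tmul, LinearMap.id_coe, id_eq, LinearEquiv.coe_coe]
    abel
  have flat_iff : (∀ x : X, nablaHatB k B C DeltaC l r alpha beta I X nabla (nabla x) = 0) ↔
      ((TensorProduct.assoc k C C X).toLinearMap
          ∘ₗ (TensorProduct.map DeltaC LinearMap.id)
          ∘ₗ (nabla + (TensorProduct.mk k C X) I) =
        (TensorProduct.map LinearMap.id (nabla + (TensorProduct.mk k C X) I))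
          ∘ₗ (nabla + (TensorProduct.mk k C X) I)) := by
    constructor
    · intro h
      apply LinearMap.ext; intro x
      have hx := h x
      rw [key] at hx
      exact sub_eq_zero.mp hx
    · intro h x
      rw [key, h, sub_self]
  constructor
  · rintro ⟨hL, hF⟩
    exact ⟨flat_iff.mp hF, fun b x => (leib_iff b x).mp (hL b x)⟩
  · rintro ⟨hco, heq⟩
    exact ⟨fun b x => (leib_iff b x).mpr (heq b x), flat_iff.mpr hco⟩


end
end
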